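/- For every integer m ≥ 3, the set RZ_m, equipped with the subspace topology from ℝ^m, is a topological 2-manifold: every point of RZ_m has an open neighborhood (in RZ_m) that is homeomorphic to an open subset of ℝ². -/

import Mathlib

open Real Topology

/-- The real moment-angle complex of the boundary of an `m`-gon:
the union over `i : Fin m` of the faces where coordinates `i, i+1` (indices mod `m`)
range in `[-1, 1]` and all other coordinates are `±1`. -/
def RZ (m : ℕ) : Set (Fin m → ℝ) :=
  ⋃ i : Fin m,
    letI : NeZero m := ⟨i.pos.ne'⟩
    {x | (∀ j, -1 ≤ x j ∧ x j ≤ 1) ∧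
      ∀ j, j ≠ i → j ≠ i + 1 → (x j = -1 ∨ x j = 1)}

section
variable {m : ℕ} [NeZero m]
set_option linter.unusedSectionVars false

def face (i : Fin m) : Set (Fin m → ℝ) :=
  {x | (∀ j, -1 ≤ x j ∧ x j ≤ 1) ∧
      ∀ j, j ≠ i → j ≠ i + 1 → (x j = -1 ∨ x j = 1)}

lemma RZ_eq : RZ m = ⋃ i, face i := rfl

lemma mem_RZ_iff {x : Fin m → ℝ} : x ∈ RZ m ↔ ∃ i, x ∈ face i := by
  rw [RZ_eq]; exact Set.mem_iUnion

lemma isClosed_face (i : Fin m) : IsClosed (face i) := by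
  have : face i = (⋂ j, (fun x : Fin m → ℝ => x j) ⁻¹' Set.Icc (-1) 1) ∩
      (⋂ j, ⋂ (_ : j ≠ i), ⋂ (_ : j ≠ i + 1), (fun x : Fin m → ℝ => x j) ⁻¹' {-1, 1}) := by
    ext x
    simp only [face, Set.mem_setOf_eq, Set.mem_inter_iff, Set.mem_iInter, Set.mem_preimage,
      Set.mem_Icc, Set.mem_insert_iff, Set.mem_singleton_iff]
  rw [this]
  apply IsClosed.inter
  · exact isClosed_iInter fun j => isClosed_Icc.preimage (continuous_apply j)
  · exact isClosed_iInter fun j => isClosed_iInter fun _ => isClosed_iInter fun _ =>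
      IsClosed.preimage (continuous_apply j)
        (Set.Finite.isClosed ((Set.finite_singleton 1).insert (-1)))

lemma isClosed_RZ : IsClosed (RZ m) := by
  rw [RZ_eq]
  exact isClosed_iUnion_of_finite isClosed_face

lemma isCompact_RZ : IsCompact (RZ m) := by
  have hb : RZ m ⊆ Metric.closedBall 0 1 := by
    rintro x hx
    rw [RZ_eq] at hx
    obtain ⟨s, ⟨i, rfl⟩, hxs⟩ := hx
    rw [Metric.mem_closedBall, dist_zero_right, pi_norm_le_iff_of_nonneg zero_le_one]
    intro j
    rw [Real.norm_eq_abs, abs_le]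
    exact ⟨(hxs.1 j).1, (hxs.1 j).2⟩
  exact (isCompact_closedBall 0 1).of_isClosed_subset isClosed_RZ hb

lemma chart_lemma (f : (Fin m → ℝ) → (Fin 2 → ℝ)) (hf : Continuous f)
    (K : Set (Fin m → ℝ)) (hK : IsCompact K) (hinj : Set.InjOn f K)
    (W : Set (Fin m → ℝ)) (hW : IsOpen W) (hsub : RZ m ∩ W ⊆ K)
    (V : Set (Fin 2 → ℝ)) (hV : IsOpen V) (himg : f '' (RZ m ∩ W) = V)
    (x : Fin m → ℝ) (hx : x ∈ RZ m) (hxW : x ∈ W) :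
    ∃ (U : Set (RZ m)) (V : Set (Fin 2 → ℝ)),
      IsOpen U ∧ IsOpen V ∧ (⟨x, hx⟩ : RZ m) ∈ U ∧ Nonempty (U ≃ₜ V) := by
  refine ⟨Subtype.val ⁻¹' W, V, hW.preimage continuous_subtype_val, hV, hxW, ?_⟩
  haveI : CompactSpace ↥K := isCompact_iff_compactSpace.mp hK
  set g : ↥(Subtype.val ⁻¹' W : Set (RZ m)) → (Fin 2 → ℝ) := fun u => f u.1.1 with hg
  have hjmem : ∀ u : ↥(Subtype.val ⁻¹' W : Set (RZ m)), (u.1.1 : Fin m → ℝ) ∈ K :=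
    fun u => hsub ⟨u.1.2, u.2⟩
  have hvv : IsEmbedding (fun u : ↥(Subtype.val ⁻¹' W : Set (RZ m)) => (u.1.1 : Fin m → ℝ)) :=
    IsEmbedding.subtypeVal.comp IsEmbedding.subtypeVal
  have hjemb : IsEmbedding (Set.codRestrict _ K hjmem) := hvv.codRestrict K hjmem
  have hfK : IsEmbedding (K.restrict f) := by
    have hcont : Continuous (K.restrict f) := hf.comp continuous_subtype_val
    have hinj' : Function.Injective (K.restrict f) := fun a b h => Subtype.ext (hinj a.2 b.2 h)
    exact (hcont.isClosedEmbedding hinj').toIsEmbedding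
  have hgemb : IsEmbedding g := by
    have : g = (K.restrict f) ∘ (Set.codRestrict _ K hjmem) := rfl
    rw [this]; exact hfK.comp hjemb
  have hrange : Set.range g = V := by
    rw [← himg]
    ext z
    constructor
    · rintro ⟨u, rfl⟩; exact ⟨u.1.1, ⟨u.1.2, u.2⟩, rfl⟩
    · rintro ⟨y, ⟨hy1, hy2⟩, rfl⟩; exact ⟨⟨⟨y, hy1⟩, hy2⟩, rfl⟩
  exact ⟨hgemb.toHomeomorph.trans (Homeomorph.setCongr hrange)⟩

/-- distance of each coordinate from a `±1` value. -/
def dd (x y : Fin m → ℝ) (j : Fin m) : ℝ := x j * (x j - y j)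

lemma dd_nonneg {x y : Fin m → ℝ} {j : Fin m} (hx : x j = -1 ∨ x j = 1)
    (hy : -1 ≤ y j ∧ y j ≤ 1) : 0 ≤ dd x y j := by
  rcases hx with h | h <;> simp [dd, h] <;> linarith [hy.1, hy.2]

lemma dd_eq_abs {x y : Fin m → ℝ} {j : Fin m} (hx : x j = -1 ∨ x j = 1)
    (hy : -1 ≤ y j ∧ y j ≤ 1) : dd x y j = |y j - x j| := by
  rcases hx with h | h <;> simp only [dd, h] <;> rw [abs_sub_comm]
  · rw [abs_of_nonpos (by linarith [hy.1])]; ring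
  · rw [abs_of_nonneg (by linarith [hy.2])]; ring

lemma dd_self (x : Fin m → ℝ) (j : Fin m) : dd x x j = 0 := by simp [dd]

lemma eq_of_dd_eq {x y y' : Fin m → ℝ} {j : Fin m} (hx : x j = -1 ∨ x j = 1)
    (h : dd x y j = dd x y' j) : y j = y' j := by
  rcases hx with h' | h' <;> simp [dd, h'] at h <;> linarith

lemma pm_eq {a b : ℝ} (ha : a = -1 ∨ a = 1) (hb : b = -1 ∨ b = 1)
    (h : |a - b| < 2) : a = b := by
  rcases ha with h1 | h1 <;> rcases hb with h2 | h2 <;> subst h1 <;> subst h2 <;>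
    revert h <;> norm_num

lemma ball_coord {x y : Fin m → ℝ} {ε : ℝ} (h : y ∈ Metric.ball x ε) (j : Fin m) :
    |y j - x j| < ε := by
  calc |y j - x j| = dist (y j) (x j) := by rw [Real.dist_eq]
    _ ≤ dist y x := dist_le_pi_dist y x j
    _ < ε := h

lemma closedBall_coord {x y : Fin m → ℝ} {ε : ℝ} (h : y ∈ Metric.closedBall x ε) (j : Fin m) :
    |y j - x j| ≤ ε := by
  calc |y j - x j| = dist (y j) (x j) := by rw [Real.dist_eq]
    _ ≤ dist y x := dist_le_pi_dist y x j
    _ ≤ ε := h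

lemma val_add_one (hm : 3 ≤ m) (a : Fin m) : ((a + 1 : Fin m) : ℕ) = ((a:ℕ) + 1) % m := by
  rw [Fin.add_def]
  simp [Fin.val_one', Nat.mod_eq_of_lt (show 1 < m by omega)]
lemma fin_ne_add_one (hm : 3 ≤ m) (k : Fin m) : k + 1 ≠ k := by
  simp only [ne_eq, Fin.ext_iff, val_add_one hm]
  have := k.isLt
  rcases Nat.lt_or_ge ((k:ℕ)+1) m with h | h
  · rw [Nat.mod_eq_of_lt h]; omega
  · have : (k:ℕ) + 1 = m := by omega
    rw [this, Nat.mod_self]; omega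
lemma fin_ne_add_two (hm : 3 ≤ m) (k : Fin m) : k + 1 + 1 ≠ k := by
  simp only [ne_eq, Fin.ext_iff, val_add_one hm]
  have h1 := k.isLt
  rcases Nat.lt_or_ge ((k:ℕ)+1) m with h | h
  · rw [Nat.mod_eq_of_lt h]
    rcases Nat.lt_or_ge ((k:ℕ)+2) m with h' | h'
    · rw [Nat.mod_eq_of_lt (by omega)]; omega
    · have : (k:ℕ) + 1 + 1 = m := by omega
      rw [this, Nat.mod_self]; omega
  · have : (k:ℕ) + 1 = m := by omega
    rw [this, Nat.mod_self]
    rw [Nat.mod_eq_of_lt (by omega)]; omega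
lemma fin_resolve (hm : 3 ≤ m) (k i : Fin m) (h1 : k = i ∨ k = i + 1)
    (h2 : k + 1 = i ∨ k + 1 = i + 1) : i = k := by
  rcases h2 with h | h
  · rcases h1 with rfl | rfl
    · exact absurd h (fin_ne_add_one hm _)
    · exact absurd h (fin_ne_add_two hm _)
  · have h' : k = i := by
      have := add_left_injective (1 : Fin m) h
      simpa using this
    exact h'.symm

lemma abs_pm_sub {c a : ℝ} (hc : c = -1 ∨ c = 1) : 1 - |a| ≤ |c - a| := by
  have h := abs_sub_abs_le_abs_sub c a
  rcases hc with rfl | rfl <;> norm_num at h <;> linarith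

lemma interior_case (hm : 3 ≤ m) (x : Fin m → ℝ) (hx : x ∈ RZ m) (k : Fin m)
    (hk : x ∈ face k) (h1 : ¬(x k = -1 ∨ x k = 1)) (h2 : ¬(x (k+1) = -1 ∨ x (k+1) = 1)) :
    ∃ (U : Set (RZ m)) (V : Set (Fin 2 → ℝ)),
      IsOpen U ∧ IsOpen V ∧ (⟨x, hx⟩ : RZ m) ∈ U ∧ Nonempty (U ≃ₜ V) := by
  have hxk : |x k| < 1 := by
    rw [abs_lt]
    constructor
    · rcases lt_or_eq_of_le (hk.1 k).1 with h | h
      · exact h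
      · exact absurd (Or.inl h.symm) h1
    · rcases lt_or_eq_of_le (hk.1 k).2 with h | h
      · exact h
      · exact absurd (Or.inr h) h1
  have hxk1 : |x (k+1)| < 1 := by
    rw [abs_lt]
    constructor
    · rcases lt_or_eq_of_le (hk.1 (k+1)).1 with h | h
      · exact h
      · exact absurd (Or.inl h.symm) h2
    · rcases lt_or_eq_of_le (hk.1 (k+1)).2 with h | h
      · exact h
      · exact absurd (Or.inr h) h2
  set ε : ℝ := min (1 - |x k|) (min (1 - |x (k+1)|) 1) with hε
  have hε0 : 0 < ε := lt_min (by linarith) (lt_min (by linarith) one_pos)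
  have hε1 : ε ≤ 1 := le_trans (min_le_right _ _) (min_le_right _ _)
  have hεk : ε ≤ 1 - |x k| := min_le_left _ _
  have hεk1 : ε ≤ 1 - |x (k+1)| := le_trans (min_le_right _ _) (min_le_left _ _)
  set f : (Fin m → ℝ) → (Fin 2 → ℝ) := fun y => ![y k - x k, y (k+1) - x (k+1)] with hf
  have hfc : Continuous f := by
    apply continuous_pi
    intro t
    fin_cases t
    · exact (continuous_apply k).sub continuous_const
    · exact (continuous_apply (k+1)).sub continuous_const
  set K : Set (Fin m → ℝ) := Metric.closedBall x ε ∩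
      (⋂ j, ⋂ (_ : j ≠ k), ⋂ (_ : j ≠ k + 1), {y | y j = x j}) with hK
  have hKc : IsCompact K := by
    apply (isCompact_closedBall x ε).inter_right
    exact isClosed_iInter fun j => isClosed_iInter fun _ => isClosed_iInter fun _ =>
      isClosed_eq (continuous_apply j) continuous_const
  have hKmem : ∀ y ∈ K, ∀ j, j ≠ k → j ≠ k + 1 → y j = x j := by
    intro y hy j hj1 hj2
    have := hy.2
    simp only [Set.mem_iInter, Set.mem_setOf_eq] at this
    exact this j hj1 hj2
  have hinj : Set.InjOn f K := by
    intro y hy y' hy' hff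
    funext j
    by_cases hj1 : j = k
    · subst hj1
      have := congrFun hff 0
      simp only [hf, Matrix.cons_val_zero] at this
      linarith
    by_cases hj2 : j = k + 1
    · subst hj2
      have := congrFun hff 1
      simp only [hf, Matrix.cons_val_one, Matrix.head_cons, Matrix.cons_val_zero] at this
      linarith
    rw [hKmem y hy j hj1 hj2, hKmem y' hy' j hj1 hj2]
  have hstruct : ∀ y ∈ RZ m ∩ Metric.ball x ε,
      (∀ j, j ≠ k → j ≠ k + 1 → y j = x j) := by
    rintro y ⟨hyRZ, hyW⟩
    obtain ⟨i, hyi⟩ := mem_RZ_iff.mp hyRZ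
    have hki : k = i ∨ k = i + 1 := by
      by_contra hc
      push_neg at hc
      have h4 : 1 - |x k| ≤ |y k - x k| := abs_pm_sub (hyi.2 k hc.1 hc.2)
      linarith [ball_coord hyW k]
    have hki1 : k + 1 = i ∨ k + 1 = i + 1 := by
      by_contra hc
      push_neg at hc
      have h4 : 1 - |x (k+1)| ≤ |y (k+1) - x (k+1)| := abs_pm_sub (hyi.2 (k+1) hc.1 hc.2)
      linarith [ball_coord hyW (k+1)]
    have hik : i = k := fin_resolve hm k i hki hki1
    subst hik
    intro j hj1 hj2
    apply pm_eq (hyi.2 j hj1 hj2) (hk.2 j hj1 hj2)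
    calc |y j - x j| < ε := ball_coord hyW j
      _ ≤ 1 := hε1
      _ < 2 := by norm_num
  have hsub : RZ m ∩ Metric.ball x ε ⊆ K := by
    rintro y hy
    refine ⟨Metric.ball_subset_closedBall hy.2, ?_⟩
    simp only [Set.mem_iInter, Set.mem_setOf_eq]
    exact hstruct y hy
  have himg : f '' (RZ m ∩ Metric.ball x ε) = Metric.ball 0 ε := by
    ext z
    constructor
    · rintro ⟨y, hy, rfl⟩
      rw [Metric.mem_ball, dist_pi_lt_iff hε0]
      intro t
      fin_cases t <;> simp only [hf, Matrix.cons_val_zero, Matrix.cons_val_one,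
        Matrix.head_cons, Pi.zero_apply, Real.dist_eq, sub_zero]
      · exact ball_coord hy.2 k
      · exact ball_coord hy.2 (k+1)
    · intro hz
      have hz0 : |z 0| < ε := by
        have h := dist_le_pi_dist z (0 : Fin 2 → ℝ) 0
        simp only [Real.dist_eq, Pi.zero_apply, sub_zero] at h
        exact lt_of_le_of_lt h hz
      have hz1 : |z 1| < ε := by
        have h := dist_le_pi_dist z (0 : Fin 2 → ℝ) 1
        simp only [Real.dist_eq, Pi.zero_apply, sub_zero] at h
        exact lt_of_le_of_lt h hz
      set y : Fin m → ℝ :=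
        Function.update (Function.update x k (x k + z 0)) (k+1) (x (k+1) + z 1) with hy
      have hyk : y k = x k + z 0 := by
        rw [hy, Function.update_of_ne (Ne.symm (fin_ne_add_one hm k)), Function.update_self]
      have hyk1 : y (k+1) = x (k+1) + z 1 := by
        rw [hy, Function.update_self]
      have hyo : ∀ j, j ≠ k → j ≠ k + 1 → y j = x j := by
        intro j hj1 hj2
        rw [hy, Function.update_of_ne hj2, Function.update_of_ne hj1]
      rcases abs_lt.mp hz0 with ⟨a1, a2⟩
      rcases abs_lt.mp hz1 with ⟨b1, b2⟩
      have hymem : y ∈ face k := by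
        constructor
        · intro j
          by_cases hj1 : j = k
          · rw [hj1, hyk]
            constructor
            · linarith [neg_abs_le (x k)]
            · linarith [le_abs_self (x k)]
          by_cases hj2 : j = k + 1
          · rw [hj2, hyk1]
            constructor
            · linarith [neg_abs_le (x (k+1))]
            · linarith [le_abs_self (x (k+1))]
          · rw [hyo j hj1 hj2]; exact hk.1 j
        · intro j hj1 hj2
          rw [hyo j hj1 hj2]
          exact hk.2 j hj1 hj2
      refine ⟨y, ⟨mem_RZ_iff.mpr ⟨k, hymem⟩, ?_⟩, ?_⟩
      · rw [Metric.mem_ball, dist_pi_lt_iff hε0]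
        intro j
        rw [Real.dist_eq]
        by_cases hj1 : j = k
        · rw [hj1, hyk, abs_lt]; constructor <;> [linarith; linarith]
        by_cases hj2 : j = k + 1
        · rw [hj2, hyk1, abs_lt]; constructor <;> [linarith; linarith]
        · rw [hyo j hj1 hj2]; simpa using hε0
      · have e0 : f y 0 = z 0 := by
          show y k - x k = z 0
          rw [hyk]; ring
        have e1 : f y 1 = z 1 := by
          show y (k+1) - x (k+1) = z 1
          rw [hyk1]; ring
        funext t
        fin_cases t
        · exact e0
        · exact e1
  exact chart_lemma f hfc K hKc hinj (Metric.ball x ε) Metric.isOpen_ball hsub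
    (Metric.ball 0 ε) Metric.isOpen_ball himg x hx (Metric.mem_ball_self hε0)

lemma dd_eq_zero_of_eq {x y : Fin m → ℝ} {j : Fin m} (h : y j = x j) : dd x y j = 0 := by
  simp [dd, h]

lemma edge_case (hm : 3 ≤ m) (x : Fin m → ℝ) (hx : x ∈ RZ m) (k : Fin m)
    (hbd : ∀ j, -1 ≤ x j ∧ x j ≤ 1)
    (h1 : ¬(x k = -1 ∨ x k = 1)) (hall : ∀ j, j ≠ k → (x j = -1 ∨ x j = 1)) :
    ∃ (U : Set (RZ m)) (V : Set (Fin 2 → ℝ)),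
      IsOpen U ∧ IsOpen V ∧ (⟨x, hx⟩ : RZ m) ∈ U ∧ Nonempty (U ≃ₜ V) := by
  have hd1 : k + 1 ≠ k := fin_ne_add_one hm k
  have hsub1 : k - 1 + 1 = k := sub_add_cancel k 1
  have hd2 : k - 1 ≠ k := by
    intro h
    apply fin_ne_add_one hm k
    conv_rhs => rw [← hsub1, h]
  have hd3 : k + 1 ≠ k - 1 := by
    intro h
    apply fin_ne_add_two hm k
    rw [h, hsub1]
  have hxk : |x k| < 1 := by
    rw [abs_lt]
    constructor
    · rcases lt_or_eq_of_le (hbd k).1 with h | h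
      · exact h
      · exact absurd (Or.inl h.symm) h1
    · rcases lt_or_eq_of_le (hbd k).2 with h | h
      · exact h
      · exact absurd (Or.inr h) h1
  set ε : ℝ := min (1 - |x k|) 1 with hε
  have hε0 : 0 < ε := lt_min (by linarith) one_pos
  have hε1 : ε ≤ 1 := min_le_right _ _
  have hεk : ε ≤ 1 - |x k| := min_le_left _ _
  set f : (Fin m → ℝ) → (Fin 2 → ℝ) :=
    fun y => ![y k - x k, dd x y (k+1) - dd x y (k-1)] with hf
  have hddcont : ∀ j : Fin m, Continuous (fun y : Fin m → ℝ => dd x y j) :=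
    fun j => continuous_const.mul (continuous_const.sub (continuous_apply j))
  have hfc : Continuous f := by
    apply continuous_pi
    intro t
    fin_cases t
    · exact (continuous_apply k).sub continuous_const
    · exact (hddcont (k+1)).sub (hddcont (k-1))
  set K : Set (Fin m → ℝ) := Metric.closedBall x ε ∩
      ((⋂ j, ⋂ (_ : j ≠ k - 1), ⋂ (_ : j ≠ k), ⋂ (_ : j ≠ k + 1), {y | y j = x j}) ∩
        (({y | y (k+1) = x (k+1)} ∪ {y | y (k-1) = x (k-1)}) ∩
          ({y | 0 ≤ dd x y (k+1)} ∩ {y | 0 ≤ dd x y (k-1)}))) with hK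
  have hKc : IsCompact K := by
    apply (isCompact_closedBall x ε).inter_right
    apply IsClosed.inter
    · exact isClosed_iInter fun j => isClosed_iInter fun _ => isClosed_iInter fun _ =>
        isClosed_iInter fun _ => isClosed_eq (continuous_apply j) continuous_const
    apply IsClosed.inter
    · exact IsClosed.union (isClosed_eq (continuous_apply _) continuous_const)
        (isClosed_eq (continuous_apply _) continuous_const)
    · exact IsClosed.inter (isClosed_le continuous_const (hddcont _))
        (isClosed_le continuous_const (hddcont _))
  have hKmem : ∀ y ∈ K, ∀ j, j ≠ k - 1 → j ≠ k → j ≠ k + 1 → y j = x j := by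
    intro y hy j hj0 hj1 hj2
    have := hy.2.1
    simp only [Set.mem_iInter, Set.mem_setOf_eq] at this
    exact this j hj0 hj1 hj2
  have hinj : Set.InjOn f K := by
    intro y hy y' hy' hff
    have c0 : y k = y' k := by
      have := congrFun hff 0
      simp only [hf, Matrix.cons_val_zero] at this
      linarith
    have c1 : dd x y (k+1) - dd x y (k-1) = dd x y' (k+1) - dd x y' (k-1) := by
      have := congrFun hff 1
      simp only [hf, Matrix.cons_val_one, Matrix.head_cons, Matrix.cons_val_zero] at this
      linarith
    have hyd := hy.2.2.1
    have hy'd := hy'.2.2.1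
    simp only [Set.mem_union, Set.mem_setOf_eq] at hyd hy'd
    have hn1 := hy.2.2.2.1
    have hn2 := hy.2.2.2.2
    have hn1' := hy'.2.2.2.1
    have hn2' := hy'.2.2.2.2
    simp only [Set.mem_setOf_eq] at hn1 hn2 hn1' hn2'
    have hp : dd x y (k+1) = dd x y' (k+1) ∧ dd x y (k-1) = dd x y' (k-1) := by
      rcases hyd with h | h <;> rcases hy'd with h' | h' <;>
        [ (have z1 := dd_eq_zero_of_eq h; have z2 := dd_eq_zero_of_eq h');
          (have z1 := dd_eq_zero_of_eq h; have z2 := dd_eq_zero_of_eq h');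
          (have z1 := dd_eq_zero_of_eq h; have z2 := dd_eq_zero_of_eq h');
          (have z1 := dd_eq_zero_of_eq h; have z2 := dd_eq_zero_of_eq h')] <;>
        constructor <;> linarith
    funext j
    by_cases hj1 : j = k
    · rw [hj1]; exact c0
    by_cases hj2 : j = k + 1
    · rw [hj2]; exact eq_of_dd_eq (hall (k+1) hd1) hp.1
    by_cases hj3 : j = k - 1
    · rw [hj3]; exact eq_of_dd_eq (hall (k-1) hd2) hp.2
    · rw [hKmem y hy j hj3 hj1 hj2, hKmem y' hy' j hj3 hj1 hj2]
  have hstruct : ∀ y ∈ RZ m ∩ Metric.ball x ε,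
      (∀ j, -1 ≤ y j ∧ y j ≤ 1) ∧
      (∀ j, j ≠ k - 1 → j ≠ k → j ≠ k + 1 → y j = x j) ∧
      (y (k+1) = x (k+1) ∨ y (k-1) = x (k-1)) := by
    rintro y ⟨hyRZ, hyW⟩
    obtain ⟨i, hyi⟩ := mem_RZ_iff.mp hyRZ
    refine ⟨hyi.1, ?_⟩
    have hki : k = i ∨ k = i + 1 := by
      by_contra hc
      push_neg at hc
      have h4 : 1 - |x k| ≤ |y k - x k| := abs_pm_sub (hyi.2 k hc.1 hc.2)
      linarith [ball_coord hyW k]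
    have key : ∀ j, j ≠ i → j ≠ i + 1 → y j = x j := by
      intro j hj1 hj2
      have hjk : j ≠ k := by
        intro h
        rcases hki with h' | h'
        · exact hj1 (h.trans h')
        · exact hj2 (h.trans h')
      apply pm_eq (hyi.2 j hj1 hj2) (hall j hjk)
      calc |y j - x j| < ε := ball_coord hyW j
        _ ≤ 1 := hε1
        _ < 2 := by norm_num
    rcases hki with h | h
    · -- k = i : face k; y (k-1) = x (k-1)
      subst h
      constructor
      · intro j hj0 hj1 hj2
        exact key j hj1 hj2
      · right
        exact key (k-1) hd2 (Ne.symm hd3)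
    · -- k = i + 1, i.e. i = k - 1 : face (k-1); y (k+1) = x (k+1)
      have hik : i = k - 1 := by
        rw [h]; rw [add_sub_cancel_right]
      subst hik
      constructor
      · intro j hj0 hj1 hj2
        apply key j hj0
        rw [hsub1]; exact hj1
      · left
        apply key (k+1) hd3
        rw [hsub1]; exact hd1
  have hsub : RZ m ∩ Metric.ball x ε ⊆ K := by
    rintro y hy
    obtain ⟨hbdy, hfix, hdisj⟩ := hstruct y hy
    refine ⟨Metric.ball_subset_closedBall hy.2, ?_, ?_, ?_, ?_⟩
    · simp only [Set.mem_iInter, Set.mem_setOf_eq]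
      exact hfix
    · simp only [Set.mem_union, Set.mem_setOf_eq]
      exact hdisj
    · exact dd_nonneg (hall (k+1) hd1) (hbdy (k+1))
    · exact dd_nonneg (hall (k-1) hd2) (hbdy (k-1))
  have himg : f '' (RZ m ∩ Metric.ball x ε) = Metric.ball 0 ε := by
    ext z
    constructor
    · rintro ⟨y, hy, rfl⟩
      obtain ⟨hbdy, hfix, hdisj⟩ := hstruct y hy
      rw [Metric.mem_ball, dist_pi_lt_iff hε0]
      intro t
      fin_cases t
      · show dist (y k - x k) 0 < ε
        rw [Real.dist_eq, sub_zero]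
        exact ball_coord hy.2 k
      · show dist (dd x y (k+1) - dd x y (k-1)) 0 < ε
        rw [Real.dist_eq, sub_zero]
        have ha1 : dd x y (k+1) = |y (k+1) - x (k+1)| := dd_eq_abs (hall (k+1) hd1) (hbdy (k+1))
        have ha2 : dd x y (k-1) = |y (k-1) - x (k-1)| := dd_eq_abs (hall (k-1) hd2) (hbdy (k-1))
        have hb1 := ball_coord hy.2 (k+1)
        have hb2 := ball_coord hy.2 (k-1)
        rcases hdisj with h | h <;> rw [abs_lt] <;>
          [ (have := dd_eq_zero_of_eq h); (have := dd_eq_zero_of_eq h)] <;>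
          constructor <;>
          [ linarith [abs_nonneg (y (k-1) - x (k-1)), abs_nonneg (y (k+1) - x (k+1))];
            linarith [abs_nonneg (y (k-1) - x (k-1)), abs_nonneg (y (k+1) - x (k+1))];
            linarith [abs_nonneg (y (k-1) - x (k-1)), abs_nonneg (y (k+1) - x (k+1))];
            linarith [abs_nonneg (y (k-1) - x (k-1)), abs_nonneg (y (k+1) - x (k+1))]]
    · intro hz
      have hz0 : |z 0| < ε := by
        have h := dist_le_pi_dist z (0 : Fin 2 → ℝ) 0
        simp only [Real.dist_eq, Pi.zero_apply, sub_zero] at h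
        exact lt_of_le_of_lt h hz
      have hz1 : |z 1| < ε := by
        have h := dist_le_pi_dist z (0 : Fin 2 → ℝ) 1
        simp only [Real.dist_eq, Pi.zero_apply, sub_zero] at h
        exact lt_of_le_of_lt h hz
      rcases abs_lt.mp hz0 with ⟨a1, a2⟩
      rcases abs_lt.mp hz1 with ⟨b1, b2⟩
      rcases le_or_gt 0 (z 1) with hsign | hsign
      · -- use face k, perturb coordinate k+1
        set y : Fin m → ℝ :=
          Function.update (Function.update x k (x k + z 0)) (k+1)
            (x (k+1) - x (k+1) * z 1) with hy
        have hyk : y k = x k + z 0 := by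
          rw [hy, Function.update_of_ne (Ne.symm hd1), Function.update_self]
        have hyk1 : y (k+1) = x (k+1) - x (k+1) * z 1 := by
          rw [hy, Function.update_self]
        have hyo : ∀ j, j ≠ k → j ≠ k + 1 → y j = x j := by
          intro j hj1 hj2
          rw [hy, Function.update_of_ne hj2, Function.update_of_ne hj1]
        have hymem : y ∈ face k := by
          constructor
          · intro j
            by_cases hj1 : j = k
            · rw [hj1, hyk]
              constructor
              · linarith [neg_abs_le (x k)]
              · linarith [le_abs_self (x k)]
            by_cases hj2 : j = k + 1
            · rw [hj2, hyk1]
              rcases hall (k+1) hd1 with h | h <;> rw [h] <;> constructor <;> linarith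
            · rw [hyo j hj1 hj2]; exact hbd j
          · intro j hj1 hj2
            rw [hyo j hj1 hj2]
            exact hall j hj1
        have dd1 : dd x y (k+1) = z 1 := by
          rcases hall (k+1) hd1 with h | h <;> simp only [dd, hyk1, h] <;> ring
        have dd2 : dd x y (k-1) = 0 :=
          dd_eq_zero_of_eq (hyo (k-1) hd2 (Ne.symm hd3))
        refine ⟨y, ⟨mem_RZ_iff.mpr ⟨k, hymem⟩, ?_⟩, ?_⟩
        · rw [Metric.mem_ball, dist_pi_lt_iff hε0]
          intro j
          rw [Real.dist_eq]
          by_cases hj1 : j = k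
          · rw [hj1, hyk, abs_lt]; constructor <;> [linarith; linarith]
          by_cases hj2 : j = k + 1
          · rw [hj2, hyk1]
            rcases hall (k+1) hd1 with h | h <;> rw [h] <;>
              rw [abs_lt] <;> constructor <;> [linarith; linarith; linarith; linarith]
          · rw [hyo j hj1 hj2]; simpa using hε0
        · have e0 : f y 0 = z 0 := by
            show y k - x k = z 0
            rw [hyk]; ring
          have e1 : f y 1 = z 1 := by
            show dd x y (k+1) - dd x y (k-1) = z 1
            rw [dd1, dd2]; ring
          funext t
          fin_cases t
          · exact e0
          · exact e1
      · -- use face (k-1), perturb coordinate k-1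
        set y : Fin m → ℝ :=
          Function.update (Function.update x k (x k + z 0)) (k-1)
            (x (k-1) + x (k-1) * z 1) with hy
        have hyk : y k = x k + z 0 := by
          rw [hy, Function.update_of_ne (Ne.symm hd2), Function.update_self]
        have hyk1 : y (k-1) = x (k-1) + x (k-1) * z 1 := by
          rw [hy, Function.update_self]
        have hyo : ∀ j, j ≠ k → j ≠ k - 1 → y j = x j := by
          intro j hj1 hj2
          rw [hy, Function.update_of_ne hj2, Function.update_of_ne hj1]
        have hymem : y ∈ face (k-1) := by
          constructor
          · intro j
            by_cases hj1 : j = k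
            · rw [hj1, hyk]
              constructor
              · linarith [neg_abs_le (x k)]
              · linarith [le_abs_self (x k)]
            by_cases hj2 : j = k - 1
            · rw [hj2, hyk1]
              rcases hall (k-1) hd2 with h | h <;> rw [h] <;> constructor <;> linarith
            · rw [hyo j hj1 hj2]; exact hbd j
          · intro j hj1 hj2
            rw [hsub1] at hj2
            rw [hyo j hj2 hj1]
            exact hall j hj2
        have dd1 : dd x y (k-1) = - z 1 := by
          rcases hall (k-1) hd2 with h | h <;> simp only [dd, hyk1, h] <;> ring
        have dd2 : dd x y (k+1) = 0 :=
          dd_eq_zero_of_eq (hyo (k+1) hd1 hd3)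
        refine ⟨y, ⟨mem_RZ_iff.mpr ⟨k-1, hymem⟩, ?_⟩, ?_⟩
        · rw [Metric.mem_ball, dist_pi_lt_iff hε0]
          intro j
          rw [Real.dist_eq]
          by_cases hj1 : j = k
          · rw [hj1, hyk, abs_lt]; constructor <;> [linarith; linarith]
          by_cases hj2 : j = k - 1
          · rw [hj2, hyk1]
            rcases hall (k-1) hd2 with h | h <;> rw [h] <;>
              rw [abs_lt] <;> constructor <;> [linarith; linarith; linarith; linarith]
          · rw [hyo j hj1 hj2]; simpa using hε0
        · have e0 : f y 0 = z 0 := by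
            show y k - x k = z 0
            rw [hyk]; ring
          have e1 : f y 1 = z 1 := by
            show dd x y (k+1) - dd x y (k-1) = z 1
            rw [dd1, dd2]; ring
          funext t
          fin_cases t
          · exact e0
          · exact e1
  exact chart_lemma f hfc K hKc hinj (Metric.ball x ε) Metric.isOpen_ball hsub
    (Metric.ball 0 ε) Metric.isOpen_ball himg x hx (Metric.mem_ball_self hε0)

/-- angle of the `n`-th vertex direction -/
noncomputable def ang (m : ℕ) (n : ℕ) : ℝ := 2 * π * n / m

/-- vertex direction vectors -/
noncomputable def vv (m : ℕ) (n : ℕ) : Fin 2 → ℝ := ![Real.cos (ang m n), Real.sin (ang m n)]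

noncomputable def vtx (i : Fin m) : Fin 2 → ℝ := vv m (i : ℕ)

noncomputable def dot2 (z w : Fin 2 → ℝ) : ℝ := z 0 * w 0 + z 1 * w 1

lemma ang_sub (hm : 3 ≤ m) (n : ℕ) : ang m (n + 1) - ang m n = 2 * π / m := by
  have h : (m : ℝ) ≠ 0 := by positivity
  unfold ang
  push_cast
  field_simp
  ring

lemma vv_mod (hm : 3 ≤ m) (n : ℕ) : vv m (n % m) = vv m n := by
  have h : (m : ℝ) ≠ 0 := by positivity
  have key : ang m (n % m) = ang m n - (n / m : ℕ) * (2 * π) := by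
    have h2 : ((n % m : ℕ) : ℝ) = (n : ℝ) - m * ((n / m : ℕ) : ℝ) := by
      have h3 := congrArg (Nat.cast : ℕ → ℝ) (Nat.mod_add_div n m)
      push_cast at h3
      linarith
    unfold ang
    rw [h2]
    field_simp
  have e1 : Real.cos (ang m n - ((n / m : ℕ) : ℝ) * (2 * π)) = Real.cos (ang m n) := by
    rw [show ((n / m : ℕ) : ℝ) * (2 * π) = ((n / m : ℕ) : ℤ) * (2 * π) by norm_cast,
      Real.cos_sub_int_mul_two_pi]
  have e2 : Real.sin (ang m n - ((n / m : ℕ) : ℝ) * (2 * π)) = Real.sin (ang m n) := by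
    rw [show ((n / m : ℕ) : ℝ) * (2 * π) = ((n / m : ℕ) : ℤ) * (2 * π) by norm_cast,
      Real.sin_sub_int_mul_two_pi]
  unfold vv
  rw [key, e1, e2]

lemma val_add_one' (hm : 3 ≤ m) (a : Fin m) : ((a + 1 : Fin m) : ℕ) = ((a:ℕ) + 1) % m := by
  rw [Fin.add_def]
  simp [Fin.val_one', Nat.mod_eq_of_lt (show 1 < m by omega)]

lemma vtx_succ (hm : 3 ≤ m) (i : Fin m) : vtx (i + 1) = vv m ((i : ℕ) + 1) := by
  unfold vtx
  rw [val_add_one' hm, vv_mod hm]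

lemma dot_vv (p q : ℕ) : dot2 (vv m p) (vv m q) = Real.cos (ang m p - ang m q) := by
  simp only [dot2, vv, Matrix.cons_val_zero, Matrix.cons_val_one, Matrix.head_cons]
  rw [Real.cos_sub]

lemma cos_pi_div_m_pos (hm : 3 ≤ m) : 0 < Real.cos (π / m) := by
  apply Real.cos_pos_of_mem_Ioo
  constructor
  · have : (0:ℝ) < π / m := by positivity
    linarith [Real.pi_pos]
  · have h3 : (3:ℝ) ≤ m := by exact_mod_cast hm
    have : π / m ≤ π / 3 := by
      apply div_le_div_of_nonneg_left Real.pi_pos.le (by norm_num) h3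
    linarith [Real.pi_pos]

lemma cos_key (hm : 3 ≤ m) {k : ℕ} (h3 : 3 ≤ k) (hk : k ≤ 2 * m - 3) :
    Real.cos (k * π / m) < Real.cos (π / m) := by
  have hm0 : (0:ℝ) < m := by positivity
  have hπ := Real.pi_pos
  rcases le_or_gt (k : ℝ) (m : ℝ) with h | h
  · apply Real.strictAntiOn_cos ⟨by positivity, ?_⟩ ⟨by positivity, ?_⟩ ?_
    · rw [div_le_iff₀ hm0]
      nlinarith [show (3:ℝ) ≤ m by exact_mod_cast hm]
    · rw [div_le_iff₀ hm0]
      nlinarith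
    · rw [div_lt_div_iff_of_pos_right hm0]
      nlinarith [show (3:ℝ) ≤ k by exact_mod_cast h3]
  · set l : ℕ := 2 * m - k with hl
    have hkl : k + l = 2 * m := by omega
    have hl3 : 3 ≤ l := by omega
    have hlm : l < m := by
      have : (m:ℝ) < k := h
      have : m < k := by exact_mod_cast this
      omega
    have hcast : (k : ℝ) * π / m = 2 * π - (l : ℝ) * π / m := by
      have : (k : ℝ) + l = 2 * m := by exact_mod_cast hkl
      field_simp
      nlinarith [this]
    rw [hcast, Real.cos_two_pi_sub]
    apply Real.strictAntiOn_cos ⟨by positivity, ?_⟩ ⟨by positivity, ?_⟩ ?_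
    · rw [div_le_iff₀ hm0]
      nlinarith [show (3:ℝ) ≤ m by exact_mod_cast hm]
    · rw [div_le_iff₀ hm0]
      nlinarith [show (l:ℝ) < m by exact_mod_cast hlm]
    · rw [div_lt_div_iff_of_pos_right hm0]
      nlinarith [show (3:ℝ) ≤ l by exact_mod_cast hl3]

lemma cos_le_aux (hm : 3 ≤ m) {k : ℕ} (h1 : 1 ≤ k) (hkm : k ≤ m) :
    Real.cos (k * π / m) ≤ Real.cos (π / m) := by
  have hm0 : (0:ℝ) < m := by positivity
  have hπ := Real.pi_pos
  rcases eq_or_lt_of_le h1 with rfl | hk1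
  · push_cast; norm_num
  apply le_of_lt
  apply Real.strictAntiOn_cos ⟨by positivity, ?_⟩ ⟨by positivity, ?_⟩ ?_
  · rw [div_le_iff₀ hm0]
    nlinarith [show (3:ℝ) ≤ m by exact_mod_cast hm]
  · rw [div_le_iff₀ hm0]
    nlinarith [show (k:ℝ) ≤ m by exact_mod_cast hkm]
  · rw [div_lt_div_iff_of_pos_right hm0]
    nlinarith [show (1:ℝ) < k by exact_mod_cast hk1]

lemma cos_le_key (hm : 3 ≤ m) {k : ℕ} (h1 : 1 ≤ k) (h2 : k ≤ 2 * m - 1) :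
    Real.cos (k * π / m) ≤ Real.cos (π / m) := by
  have hm0 : (0:ℝ) < m := by positivity
  have hπ := Real.pi_pos
  rcases le_or_gt k m with hkm | hkm
  · exact cos_le_aux hm h1 hkm
  · set l : ℕ := 2 * m - k with hl
    have hkl : k + l = 2 * m := by omega
    have hl1 : 1 ≤ l := by omega
    have hlm : l ≤ m := by omega
    have hcast : (k : ℝ) * π / m = 2 * π - (l : ℝ) * π / m := by
      have : (k : ℝ) + l = 2 * m := by exact_mod_cast hkl
      field_simp
      nlinarith [this]
    rw [hcast, Real.cos_two_pi_sub]
    exact cos_le_aux hm hl1 hlm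

lemma E_core (hm : 3 ≤ m) (a b : ℕ) :
    Real.cos (ang m a - ang m b) + Real.cos (ang m a - ang m (b+1)) =
      2 * Real.cos ((2*((a:ℝ)-b)-1) * π / m) * Real.cos (π / m) := by
  have h : (m : ℝ) ≠ 0 := by positivity
  have e1 : ang m a - ang m b = (2*((a:ℝ)-b)-1) * π / m + π / m := by
    unfold ang; field_simp; ring
  have e2 : ang m a - ang m (b+1) = (2*((a:ℝ)-b)-1) * π / m - π / m := by
    unfold ang; push_cast; field_simp; ring
  rw [e1, e2, Real.cos_add, Real.cos_sub]
  ring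

lemma c_eq (hm : 3 ≤ m) : 1 + Real.cos (2 * π / m) = 2 * Real.cos (π/m) * Real.cos (π/m) := by
  have : 2 * π / m = 2 * (π / m) := by ring
  rw [this, Real.cos_two_mul]
  ring

lemma cos_int_bridge (hm : 3 ≤ m) (a b : ℕ) :
    Real.cos ((2*((a:ℝ)-b)-1) * π / m) =
      Real.cos (((2*((a:ℤ)-b)-1).natAbs : ℝ) * π / m) := by
  have h1 : ((((2*((a:ℤ)-b)-1).natAbs : ℕ)) : ℝ) = |((2*((a:ℤ)-b)-1 : ℤ) : ℝ)| := by
    rw [Nat.cast_natAbs, Int.cast_abs]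
  rw [h1]
  have h2 : ((2*((a:ℤ)-b)-1 : ℤ) : ℝ) = 2*((a:ℝ)-b)-1 := by push_cast; ring
  rw [h2]
  rw [← Real.cos_abs ((2*((a:ℝ)-b)-1) * π / m)]
  congr 1
  rw [abs_div, abs_mul, abs_of_nonneg Real.pi_pos.le, abs_of_nonneg (by positivity : (0:ℝ) ≤ m)]
  
lemma E_le_nat (hm : 3 ≤ m) (a b : ℕ) (ha : a < m) (hb : b < m) :
    Real.cos (ang m a - ang m b) + Real.cos (ang m a - ang m (b+1)) ≤
      1 + Real.cos (2 * π / m) := by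
  rw [E_core hm a b, c_eq hm]
  have hcpos := cos_pi_div_m_pos hm
  set k : ℕ := (2*((a:ℤ)-b)-1).natAbs with hk
  have hb1 : 1 ≤ k := by omega
  have hb2 : k ≤ 2 * m - 1 := by omega
  have := cos_le_key hm hb1 hb2
  rw [cos_int_bridge hm a b]
  nlinarith

lemma E_lt_nat (hm : 3 ≤ m) (a b : ℕ) (ha : a < m) (hb : b < m)
    (hne1 : a ≠ b) (hne2 : a ≠ (b+1) % m) :
    Real.cos (ang m a - ang m b) + Real.cos (ang m a - ang m (b+1)) <
      1 + Real.cos (2 * π / m) := by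
  rw [E_core hm a b, c_eq hm]
  have hcpos := cos_pi_div_m_pos hm
  set k : ℕ := (2*((a:ℤ)-b)-1).natAbs with hk
  have hmod : (b+1) % m = if b + 1 = m then 0 else b + 1 := by
    rcases Nat.lt_or_ge (b+1) m with h | h
    · rw [Nat.mod_eq_of_lt h, if_neg (by omega)]
    · have : b + 1 = m := by omega
      rw [this, Nat.mod_self, if_pos rfl]
  have hb1 : 3 ≤ k := by
    rcases Nat.lt_or_ge (b+1) m with h | h
    · rw [hmod, if_neg (by omega)] at hne2
      omega
    · rw [hmod, if_pos (by omega)] at hne2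
      omega
  have hb2 : k ≤ 2 * m - 3 := by
    rcases Nat.lt_or_ge (b+1) m with h | h
    · omega
    · rw [hmod, if_pos (by omega)] at hne2
      omega
  have := cos_key hm hb1 hb2
  rw [cos_int_bridge hm a b]
  nlinarith

lemma dot_vtx (hm : 3 ≤ m) (p q : Fin m) :
    dot2 (vtx p) (vtx q) = Real.cos (ang m p - ang m q) := dot_vv _ _

lemma dot_vtx_succ (hm : 3 ≤ m) (p q : Fin m) :
    dot2 (vtx p) (vtx (q+1)) = Real.cos (ang m p - ang m ((q:ℕ)+1)) := by
  rw [vtx_succ hm]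
  exact dot_vv _ _

lemma E_le_fin (hm : 3 ≤ m) (p q : Fin m) :
    dot2 (vtx p) (vtx q) + dot2 (vtx p) (vtx (q+1)) ≤ 1 + Real.cos (2 * π / m) := by
  rw [dot_vtx hm, dot_vtx_succ hm]
  exact E_le_nat hm p q p.isLt q.isLt

lemma E_lt_fin (hm : 3 ≤ m) (p q : Fin m) (h1 : p ≠ q) (h2 : p ≠ q + 1) :
    dot2 (vtx p) (vtx q) + dot2 (vtx p) (vtx (q+1)) < 1 + Real.cos (2 * π / m) := by
  rw [dot_vtx hm, dot_vtx_succ hm]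
  apply E_lt_nat hm p q p.isLt q.isLt
  · exact fun h => h1 (Fin.ext h)
  · intro h
    apply h2
    apply Fin.ext
    rw [val_add_one' hm, ← h]

lemma E_eq_self (hm : 3 ≤ m) (q : Fin m) :
    dot2 (vtx q) (vtx q) + dot2 (vtx q) (vtx (q+1)) = 1 + Real.cos (2 * π / m) := by
  rw [dot_vtx hm, dot_vtx_succ hm, sub_self, Real.cos_zero]
  congr 1
  rw [show ang m q - ang m ((q:ℕ)+1) = -(ang m ((q:ℕ)+1) - ang m q) by ring, Real.cos_neg,
    ang_sub hm]

lemma E_eq_succ (hm : 3 ≤ m) (q : Fin m) :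
    dot2 (vtx (q+1)) (vtx q) + dot2 (vtx (q+1)) (vtx (q+1)) = 1 + Real.cos (2 * π / m) := by
  have h1 : dot2 (vtx (q+1)) (vtx q) = Real.cos (2 * π / m) := by
    rw [vtx_succ hm, show (vtx q : Fin 2 → ℝ) = vv m (q:ℕ) from rfl, dot_vv, ang_sub hm]
  have h2 : dot2 (vtx (q+1)) (vtx (q+1)) = 1 := by
    rw [vtx_succ hm, dot_vv, sub_self, Real.cos_zero]
  rw [h1, h2]
  ring

lemma sin_two_pi_div_pos (hm : 3 ≤ m) : 0 < Real.sin (2 * π / m) := by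
  have hπ := Real.pi_pos
  have hm3 : (3:ℝ) ≤ m := by exact_mod_cast hm
  apply Real.sin_pos_of_pos_of_lt_pi
  · positivity
  · rw [div_lt_iff₀ (by positivity : (0:ℝ) < m)]
    nlinarith

lemma det_vtx (hm : 3 ≤ m) (i : Fin m) :
    vtx i 0 * vtx (i+1) 1 - vtx i 1 * vtx (i+1) 0 = Real.sin (2 * π / m) := by
  rw [vtx_succ hm]
  unfold vtx vv
  simp only [Matrix.cons_val_zero, Matrix.cons_val_one, Matrix.head_cons]
  rw [← ang_sub hm (i:ℕ), Real.sin_sub]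
  ring

lemma indep (hm : 3 ≤ m) (i : Fin m) {a b : ℝ}
    (h0 : a * vtx i 0 + b * vtx (i+1) 0 = 0) (h1 : a * vtx i 1 + b * vtx (i+1) 1 = 0) :
    a = 0 ∧ b = 0 := by
  have hd := det_vtx hm i
  have hs := sin_two_pi_div_pos hm
  constructor
  · have ha : a * Real.sin (2 * π / m) = 0 := by
      rw [← hd]
      linear_combination (vtx (i+1) 1) * h0 - (vtx (i+1) 0) * h1
    rcases mul_eq_zero.mp ha with h | h
    · exact h
    · linarith
  · have hb : b * Real.sin (2 * π / m) = 0 := by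
      rw [← hd]
      linear_combination (vtx i 0) * h1 - (vtx i 1) * h0
    rcases mul_eq_zero.mp hb with h | h
    · exact h
    · linarith

set_option maxHeartbeats 1000000 in
lemma sector_decomp (hm : 3 ≤ m) (z : Fin 2 → ℝ) :
    ∃ (i : Fin m) (a b : ℝ), 0 ≤ a ∧ 0 ≤ b ∧
      a ≤ (|z 0| + |z 1|) / Real.sin (2*π/m) ∧ b ≤ (|z 0| + |z 1|) / Real.sin (2*π/m) ∧
      (∀ t, z t = a * vtx i t + b * vtx (i+1) t) := by
  have hS := sin_two_pi_div_pos (m := m) hm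
  have hπ := Real.pi_pos
  have hm0 : (0:ℝ) < m := by positivity
  have hm3 : (3:ℝ) ≤ m := by exact_mod_cast hm
  by_cases hz : z 0 = 0 ∧ z 1 = 0
  · refine ⟨⟨0, by omega⟩, 0, 0, le_refl 0, le_refl 0, by positivity, by positivity, ?_⟩
    intro t
    fin_cases t
    · show z 0 = 0 * vtx _ 0 + 0 * vtx _ 0
      rw [hz.1]; ring
    · show z 1 = 0 * vtx _ 1 + 0 * vtx _ 1
      rw [hz.2]; ring
  · set w : ℂ := ⟨z 0, z 1⟩ with hw
    have hw0 : w ≠ 0 := by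
      intro h
      rw [Complex.ext_iff] at h
      simp only [Complex.zero_re, Complex.zero_im] at h
      exact hz ⟨h.1, h.2⟩
    set r := ‖w‖ with hr
    have hr0 : 0 < r := by
      rw [hr]
      exact norm_pos_iff.mpr hw0
    have hc : z 0 = r * Real.cos w.arg := by
      rw [Complex.cos_arg hw0]
      show z 0 = r * (w.re / r)
      field_simp
      rfl
    have hsin : z 1 = r * Real.sin w.arg := by
      rw [Complex.sin_arg]
      show z 1 = r * (w.im / r)
      field_simp
      rfl
    set θ := if 0 ≤ w.arg then w.arg else w.arg + 2*π with hθ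
    have hcosθ : Real.cos θ = Real.cos w.arg := by
      rw [hθ]; split_ifs with h
      · rfl
      · exact Real.cos_add_two_pi _
    have hsinθ : Real.sin θ = Real.sin w.arg := by
      rw [hθ]; split_ifs with h
      · rfl
      · exact Real.sin_add_two_pi _
    have hθ0 : 0 ≤ θ := by
      rw [hθ]; split_ifs with h
      · exact h
      · push_neg at h
        linarith [Complex.neg_pi_lt_arg w]
    have hθ2 : θ < 2*π := by
      rw [hθ]; split_ifs with h
      · linarith [Complex.arg_le_pi w]
      · push_neg at h
        linarith
    set u := θ * m / (2*π) with hu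
    have hu0 : 0 ≤ u := by positivity
    have hum : u < m := by
      rw [hu, div_lt_iff₀ (by positivity)]
      nlinarith
    set n := (⌊u⌋).toNat with hn
    have hfl0 : 0 ≤ ⌊u⌋ := Int.floor_nonneg.mpr hu0
    have hncast : (n : ℝ) = ((⌊u⌋ : ℤ) : ℝ) := by
      rw [hn]
      exact_mod_cast congrArg (Int.cast : ℤ → ℝ) (Int.toNat_of_nonneg hfl0)
    have hnu : (n : ℝ) ≤ u := by rw [hncast]; exact Int.floor_le u
    have hun : u < (n : ℝ) + 1 := by rw [hncast]; exact Int.lt_floor_add_one u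
    have hnm : n < m := by exact_mod_cast lt_of_le_of_lt hnu hum
    set α := ang m n with hα
    set β := ang m (n+1) with hβ
    have hβα : β - α = 2*π/m := ang_sub hm n
    have hθeq : θ = u * (2*π) / m := by
      rw [hu]
      field_simp
    have hαθ : α ≤ θ := by
      rw [hθeq, hα]
      unfold ang
      rw [div_le_div_iff₀ hm0 hm0]
      nlinarith [mul_le_mul_of_nonneg_right hnu (le_of_lt (by positivity : (0:ℝ) < 2*π*(m:ℝ)))]
    have hθβ : θ ≤ β := by
      rw [hθeq, hβ]
      unfold ang
      push_cast
      rw [div_le_div_iff₀ hm0 hm0]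
      nlinarith [mul_le_mul_of_nonneg_right (le_of_lt hun) (le_of_lt (by positivity : (0:ℝ) < 2*π*(m:ℝ)))]
    have h2πm : 2*π/m ≤ π := by
      rw [div_le_iff₀ hm0]
      nlinarith [hπ, hm3]
    have hsb : 0 ≤ Real.sin (β - θ) :=
      Real.sin_nonneg_of_nonneg_of_le_pi (by linarith) (by linarith)
    have hsa : 0 ≤ Real.sin (θ - α) :=
      Real.sin_nonneg_of_nonneg_of_le_pi (by linarith) (by linarith)
    have hrb : r ≤ |z 0| + |z 1| := Complex.norm_le_abs_re_add_abs_im w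
    set i : Fin m := ⟨n, hnm⟩ with hi
    have hv0 : vtx i 0 = Real.cos α := rfl
    have hv1 : vtx i 1 = Real.sin α := rfl
    have hw0' : vtx (i+1) 0 = Real.cos β := by rw [vtx_succ hm]; rfl
    have hw1' : vtx (i+1) 1 = Real.sin β := by rw [vtx_succ hm]; rfl
    have hSeq : Real.sin (2*π/m) = Real.sin β * Real.cos α - Real.cos β * Real.sin α := by
      rw [← hβα, Real.sin_sub]
    have hSne : Real.sin β * Real.cos α - Real.cos β * Real.sin α ≠ 0 := by
      rw [← hSeq]; exact hS.ne'
    clear_value w r θ u n α β i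
    refine ⟨i, r * Real.sin (β - θ) / Real.sin (2*π/m),
      r * Real.sin (θ - α) / Real.sin (2*π/m),
      div_nonneg (mul_nonneg hr0.le hsb) hS.le,
      div_nonneg (mul_nonneg hr0.le hsa) hS.le, ?_, ?_, ?_⟩
    · gcongr
      nlinarith [Real.sin_le_one (β - θ)]
    · gcongr
      nlinarith [Real.sin_le_one (θ - α)]
    · intro t
      fin_cases t
      · show z 0 = r * Real.sin (β - θ) / Real.sin (2*π/m) * vtx i 0 +
          r * Real.sin (θ - α) / Real.sin (2*π/m) * vtx (i+1) 0
        rw [hv0, hw0', hc, ← hcosθ, hSeq, Real.sin_sub, Real.sin_sub]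
        field_simp
        ring
      · show z 1 = r * Real.sin (β - θ) / Real.sin (2*π/m) * vtx i 1 +
          r * Real.sin (θ - α) / Real.sin (2*π/m) * vtx (i+1) 1
        rw [hv1, hw1', hsin, ← hsinθ, hSeq, Real.sin_sub, Real.sin_sub]
        field_simp
        ring

noncomputable def EE (p q : Fin m) : ℝ := dot2 (vtx p) (vtx q) + dot2 (vtx p) (vtx (q+1))

lemma EE_le (hm : 3 ≤ m) (p q : Fin m) : EE p q ≤ 1 + Real.cos (2 * π / m) :=
  E_le_fin hm p q

lemma EE_lt (hm : 3 ≤ m) (p q : Fin m) (h1 : p ≠ q) (h2 : p ≠ q + 1) :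
    EE p q < 1 + Real.cos (2 * π / m) := E_lt_fin hm p q h1 h2

lemma EE_self (hm : 3 ≤ m) (q : Fin m) : EE q q = 1 + Real.cos (2 * π / m) :=
  E_eq_self hm q

lemma EE_succ (hm : 3 ≤ m) (q : Fin m) : EE (q+1) q = 1 + Real.cos (2 * π / m) :=
  E_eq_succ hm q

lemma EE_eq_cases (hm : 3 ≤ m) (p q : Fin m) (h : EE p q = 1 + Real.cos (2 * π / m)) :
    p = q ∨ p = q + 1 := by
  by_contra hc
  push_neg at hc
  exact absurd h (ne_of_lt (EE_lt hm p q hc.1 hc.2))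

set_option maxHeartbeats 2000000 in
lemma vertex_case (hm : 3 ≤ m) (x : Fin m → ℝ) (hx : x ∈ RZ m)
    (hall : ∀ j, x j = -1 ∨ x j = 1) :
    ∃ (U : Set (RZ m)) (V : Set (Fin 2 → ℝ)),
      IsOpen U ∧ IsOpen V ∧ (⟨x, hx⟩ : RZ m) ∈ U ∧ Nonempty (U ≃ₜ V) := by
  have hπ := Real.pi_pos
  have hS := sin_two_pi_div_pos (m := m) hm
  have hS1 : Real.sin (2*π/m) ≤ 1 := Real.sin_le_one _
  have hd1 : ∀ i : Fin m, i + 1 ≠ i := fin_ne_add_one hm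
  have hd2 : ∀ i : Fin m, i + 1 + 1 ≠ i := fin_ne_add_two hm
  have hxx : ∀ j, x j * x j = 1 := by
    intro j; rcases hall j with h | h <;> rw [h] <;> norm_num
  have hx1 : ∀ j, |x j| = 1 := by
    intro j; rcases hall j with h | h <;> rw [h] <;> norm_num
  have hbd : ∀ j, -1 ≤ x j ∧ x j ≤ 1 := by
    intro j; rcases hall j with h | h <;> rw [h] <;> norm_num
  set f : (Fin m → ℝ) → (Fin 2 → ℝ) := fun y t => ∑ j : Fin m, dd x y j * vtx j t with hf
  have hfc : Continuous f := by
    apply continuous_pi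
    intro t
    apply continuous_finset_sum
    intro j _
    exact (continuous_const.mul (continuous_const.sub (continuous_apply j))).mul
      continuous_const
  set δ : ℝ := Real.sin (2*π/m) / 4 with hδ
  have hδ0 : 0 < δ := by positivity
  set K : Set (Fin m → ℝ) := RZ m ∩ Metric.closedBall x 1 with hK
  have hKc : IsCompact K := isCompact_RZ.inter_right Metric.isClosed_closedBall
  have hstruct : ∀ y ∈ K, ∃ i : Fin m, ∀ j, j ≠ i → j ≠ i + 1 → y j = x j := by
    rintro y ⟨hyRZ, hyB⟩
    obtain ⟨i, hyi⟩ := mem_RZ_iff.mp hyRZ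
    exact ⟨i, fun j hj1 hj2 => pm_eq (hyi.2 j hj1 hj2) (hall j)
      (lt_of_le_of_lt (closedBall_coord hyB j) (by norm_num))⟩
  have hbdK : ∀ y ∈ K, ∀ j, -1 ≤ y j ∧ y j ≤ 1 := by
    rintro y ⟨hyRZ, _⟩
    obtain ⟨i, hyi⟩ := mem_RZ_iff.mp hyRZ
    exact hyi.1
  have freduce : ∀ (y : Fin m → ℝ) (i : Fin m), (∀ j, j ≠ i → j ≠ i+1 → y j = x j) →
      ∀ t, f y t = dd x y i * vtx i t + dd x y (i+1) * vtx (i+1) t := by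
    intro y i hy t
    have e1 : ∑ j ∈ ({i, i+1} : Finset (Fin m)), dd x y j * vtx j t
        = ∑ j : Fin m, dd x y j * vtx j t := by
      apply Finset.sum_subset (Finset.subset_univ _)
      intro j _ hj
      simp only [Finset.mem_insert, Finset.mem_singleton] at hj
      push_neg at hj
      rw [dd_eq_zero_of_eq (hy j hj.1 hj.2), zero_mul]
    show (∑ j : Fin m, dd x y j * vtx j t) = _
    rw [← e1, Finset.sum_pair (Ne.symm (hd1 i))]
  set c : ℝ := 1 + Real.cos (2 * π / m) with hc
  have hc0 : 0 < c := by
    rw [hc, c_eq hm]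
    nlinarith [cos_pi_div_m_pos hm]
  have hinj : Set.InjOn f K := by
    intro y hy y' hy' hff
    obtain ⟨i, hyi⟩ := hstruct y hy
    obtain ⟨i', hyi'⟩ := hstruct y' hy'
    set a := dd x y i with ha
    set b := dd x y (i+1) with hb
    set a' := dd x y' i' with ha'
    set b' := dd x y' (i'+1) with hb'
    have ha0 : 0 ≤ a := dd_nonneg (hall i) (hbdK y hy i)
    have hb0 : 0 ≤ b := dd_nonneg (hall (i+1)) (hbdK y hy (i+1))
    have ha0' : 0 ≤ a' := dd_nonneg (hall i') (hbdK y' hy' i')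
    have hb0' : 0 ≤ b' := dd_nonneg (hall (i'+1)) (hbdK y' hy' (i'+1))
    have hdot : ∀ q : Fin m, a * EE i q + b * EE (i+1) q = a' * EE i' q + b' * EE (i'+1) q := by
      intro q
      have h0 := congrFun hff 0
      have h1 := congrFun hff 1
      rw [freduce y i hyi 0, freduce y' i' hyi' 0] at h0
      rw [freduce y i hyi 1, freduce y' i' hyi' 1] at h1
      simp only [EE, dot2]
      linear_combination (vtx q 0 + vtx (q+1) 0) * h0 + (vtx q 1 + vtx (q+1) 1) * h1
    have e1 : (a + b) * c = a' * EE i' i + b' * EE (i'+1) i := by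
      have h := hdot i
      rw [EE_self hm i, EE_succ hm i, ← hc] at h
      linarith [h]
    have e2 : (a' + b') * c = a * EE i i' + b * EE (i+1) i' := by
      have h := hdot i'
      rw [EE_self hm i', EE_succ hm i', ← hc] at h
      linarith [h]
    have le1 : a' * EE i' i + b' * EE (i'+1) i ≤ (a' + b') * c := by
      have q1 := EE_le hm i' i
      have q2 := EE_le hm (i'+1) i
      rw [← hc] at q1 q2
      nlinarith
    have le2 : a * EE i i' + b * EE (i+1) i' ≤ (a + b) * c := by
      have q1 := EE_le hm i i'
      have q2 := EE_le hm (i+1) i'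
      rw [← hc] at q1 q2
      nlinarith
    have heqc : (a + b) * c = (a' + b') * c := le_antisymm (by linarith) (by linarith)
    have heq : a + b = a' + b' := mul_right_cancel₀ hc0.ne' heqc
    have cond1a : a' * (c - EE i' i) = 0 ∧ b' * (c - EE (i'+1) i) = 0 := by
      have hsum : a' * (c - EE i' i) + b' * (c - EE (i'+1) i) = 0 := by
        linear_combination e1 - c * heq
      have t1 : 0 ≤ a' * (c - EE i' i) := by
        have := EE_le hm i' i; rw [← hc] at this
        exact mul_nonneg ha0' (by linarith)
      have t2 : 0 ≤ b' * (c - EE (i'+1) i) := by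
        have := EE_le hm (i'+1) i; rw [← hc] at this
        exact mul_nonneg hb0' (by linarith)
      constructor <;> linarith
    have cond2a : a * (c - EE i i') = 0 ∧ b * (c - EE (i+1) i') = 0 := by
      have hsum : a * (c - EE i i') + b * (c - EE (i+1) i') = 0 := by
        linear_combination e2 - c * heq.symm
      have t1 : 0 ≤ a * (c - EE i i') := by
        have := EE_le hm i i'; rw [← hc] at this
        exact mul_nonneg ha0 (by linarith)
      have t2 : 0 ≤ b * (c - EE (i+1) i') := by
        have := EE_le hm (i+1) i'; rw [← hc] at this
        exact mul_nonneg hb0 (by linarith)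
      constructor <;> linarith
    have hzeq : ∀ t, a * vtx i t + b * vtx (i+1) t = a' * vtx i' t + b' * vtx (i'+1) t := by
      intro t
      rw [ha, hb, ha', hb', ← freduce y i hyi t, ← freduce y' i' hyi' t, hff]
    by_cases hii : i = i'
    · subst hii
      have h0 : (a - a') * vtx i 0 + (b - b') * vtx (i+1) 0 = 0 := by
        linear_combination hzeq 0
      have h1 : (a - a') * vtx i 1 + (b - b') * vtx (i+1) 1 = 0 := by
        linear_combination hzeq 1
      obtain ⟨hA, hB⟩ := indep hm i h0 h1
      funext j
      by_cases hj1 : j = i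
      · rw [hj1]
        apply eq_of_dd_eq (hall i)
        rw [← ha, ← ha']; linarith
      by_cases hj2 : j = i + 1
      · rw [hj2]
        apply eq_of_dd_eq (hall (i+1))
        rw [← hb, ← hb']; linarith
      · rw [hyi j hj1 hj2, hyi' j hj1 hj2]
    · have hi'i : i' ≠ i := fun h => hii h.symm
      have ca' : a' = 0 ∨ i' = i + 1 := by
        rcases mul_eq_zero.mp cond1a.1 with h | h
        · exact Or.inl h
        · have : EE i' i = c := by linarith
          rcases EE_eq_cases hm i' i (by rw [← hc]; exact this) with h' | h'
          · exact absurd h' hi'i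
          · exact Or.inr h'
      have cb' : b' = 0 ∨ i' + 1 = i := by
        rcases mul_eq_zero.mp cond1a.2 with h | h
        · exact Or.inl h
        · have : EE (i'+1) i = c := by linarith
          rcases EE_eq_cases hm (i'+1) i (by rw [← hc]; exact this) with h' | h'
          · exact Or.inr h'
          · exfalso
            have := add_left_injective (1 : Fin m) h'
            exact hii this.symm
      rcases ca' with ha'0 | hi'eq
      · rcases cb' with hb'0 | hi'1
        · -- a' = b' = 0
          have hab : a = 0 ∧ b = 0 := by
            constructor <;> linarith
          have hyx : ∀ j, y j = x j := by
            intro j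
            by_cases hj1 : j = i
            · rw [hj1]
              apply eq_of_dd_eq (hall i)
              rw [dd_self, ← ha]; exact hab.1
            by_cases hj2 : j = i + 1
            · rw [hj2]
              apply eq_of_dd_eq (hall (i+1))
              rw [dd_self, ← hb]; exact hab.2
            · exact hyi j hj1 hj2
          have hy'x : ∀ j, y' j = x j := by
            intro j
            by_cases hj1 : j = i'
            · rw [hj1]
              apply eq_of_dd_eq (hall i')
              rw [dd_self, ← ha']; exact ha'0
            by_cases hj2 : j = i' + 1
            · rw [hj2]
              apply eq_of_dd_eq (hall (i'+1))
              rw [dd_self, ← hb']; exact hb'0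
            · exact hyi' j hj1 hj2
          funext j; rw [hyx j, hy'x j]
        · -- a' = 0, i' + 1 = i : z = b' * vtx i
          have h0 : (a - b') * vtx i 0 + b * vtx (i+1) 0 = 0 := by
            have h := hzeq 0
            rw [ha'0, hi'1] at h
            linear_combination h
          have h1 : (a - b') * vtx i 1 + b * vtx (i+1) 1 = 0 := by
            have h := hzeq 1
            rw [ha'0, hi'1] at h
            linear_combination h
          obtain ⟨hA, hB⟩ := indep hm i h0 h1
          have hii1 : i' ≠ i + 1 := by
            intro h
            apply hd2 i
            rw [← h]; exact hi'1
          funext j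
          by_cases hj1 : j = i
          · rw [hj1]
            apply eq_of_dd_eq (hall i)
            have : dd x y' i = b' := by rw [hb', hi'1]
            rw [← ha, this]; linarith
          by_cases hj2 : j = i + 1
          · rw [hj2]
            have hy1 : y (i+1) = x (i+1) := by
              apply eq_of_dd_eq (hall (i+1))
              rw [dd_self, ← hb]; exact hB
            have hy2 : y' (i+1) = x (i+1) := by
              apply hyi'
              · exact Ne.symm hii1
              · rw [hi'1]; exact hd1 i
            rw [hy1, hy2]
          by_cases hj3 : j = i'
          · rw [hj3]
            have hy1 : y i' = x i' := hyi i' hi'i hii1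
            have hy2 : y' i' = x i' := by
              apply eq_of_dd_eq (hall i')
              rw [dd_self, ← ha']; exact ha'0
            rw [hy1, hy2]
          · rw [hyi j hj1 hj2]
            rw [hyi' j hj3 (by rw [hi'1]; exact hj1)]
      · rcases cb' with hb'0 | hi'1
        · -- i' = i + 1, b' = 0 : z = a' * vtx (i+1)
          have h0 : a * vtx i 0 + (b - a') * vtx (i+1) 0 = 0 := by
            have h := hzeq 0
            rw [hb'0, hi'eq] at h
            linear_combination h
          have h1 : a * vtx i 1 + (b - a') * vtx (i+1) 1 = 0 := by
            have h := hzeq 1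
            rw [hb'0, hi'eq] at h
            linear_combination h
          obtain ⟨hA, hB⟩ := indep hm i h0 h1
          funext j
          by_cases hj1 : j = i
          · rw [hj1]
            have hy1 : y i = x i := by
              apply eq_of_dd_eq (hall i)
              rw [dd_self, ← ha]; exact hA
            have hy2 : y' i = x i := by
              apply hyi'
              · rw [hi'eq]; exact fun h => hd1 i h.symm
              · rw [hi'eq]; exact fun h => hd2 i h.symm
            rw [hy1, hy2]
          by_cases hj2 : j = i + 1
          · rw [hj2]
            apply eq_of_dd_eq (hall (i+1))
            have : dd x y' (i+1) = a' := by rw [ha', hi'eq]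
            rw [← hb, this]; linarith
          by_cases hj3 : j = i' + 1
          · rw [hj3]
            have hji : i' + 1 ≠ i := by
              rw [hi'eq]; exact hd2 i
            have hji1 : i' + 1 ≠ i + 1 := by
              rw [hi'eq]; exact hd1 (i+1)
            have hy1 : y (i'+1) = x (i'+1) := hyi _ hji hji1
            have hy2 : y' (i'+1) = x (i'+1) := by
              apply eq_of_dd_eq (hall (i'+1))
              rw [dd_self, ← hb']; exact hb'0
            rw [hy1, hy2]
          · rw [hyi j hj1 hj2]
            rw [hyi' j (by rw [hi'eq]; exact hj2) hj3]
        · exfalso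
          apply hd2 i
          rw [← hi'eq]; exact hi'1
  -- the open set and image
  set W : Set (Fin m → ℝ) := Metric.ball x 1 ∩ f ⁻¹' (Metric.ball 0 δ) with hW
  have hWopen : IsOpen W := Metric.isOpen_ball.inter (Metric.isOpen_ball.preimage hfc)
  have hsub : RZ m ∩ W ⊆ K := by
    rintro y ⟨hyRZ, hyB, _⟩
    exact ⟨hyRZ, Metric.ball_subset_closedBall hyB⟩
  have hfx : f x = 0 := by
    funext t
    show (∑ j : Fin m, dd x x j * vtx j t) = 0
    apply Finset.sum_eq_zero
    intro j _
    rw [dd_self, zero_mul]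
  have hxW : x ∈ W := by
    constructor
    · exact Metric.mem_ball_self one_pos
    · show f x ∈ Metric.ball 0 δ
      rw [hfx]
      exact Metric.mem_ball_self hδ0
  have himg : f '' (RZ m ∩ W) = Metric.ball 0 δ := by
    ext z
    constructor
    · rintro ⟨y, ⟨hyRZ, hyB, hyP⟩, rfl⟩
      exact hyP
    · intro hz
      have hz0 : |z 0| < δ := by
        have h := dist_le_pi_dist z (0 : Fin 2 → ℝ) 0
        simp only [Real.dist_eq, Pi.zero_apply, sub_zero] at h
        exact lt_of_le_of_lt h hz
      have hz1 : |z 1| < δ := by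
        have h := dist_le_pi_dist z (0 : Fin 2 → ℝ) 1
        simp only [Real.dist_eq, Pi.zero_apply, sub_zero] at h
        exact lt_of_le_of_lt h hz
      obtain ⟨i, a, b, ha0, hb0, haB, hbB, hzab⟩ := sector_decomp hm z
      have hsum : |z 0| + |z 1| < Real.sin (2*π/m) / 2 := by
        rw [hδ] at hz0 hz1
        linarith
      have hbound : (|z 0| + |z 1|) / Real.sin (2*π/m) < 1 / 2 := by
        rw [div_lt_iff₀ hS]
        nlinarith
      have ha1 : a < 1 := by
        have := lt_of_le_of_lt haB hbound
        linarith
      have hb1 : b < 1 := by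
        have := lt_of_le_of_lt hbB hbound
        linarith
      set y : Fin m → ℝ :=
        Function.update (Function.update x i (x i - x i * a)) (i+1)
          (x (i+1) - x (i+1) * b) with hy
      have hyk : y i = x i - x i * a := by
        rw [hy, Function.update_of_ne (Ne.symm (hd1 i)), Function.update_self]
      have hyk1 : y (i+1) = x (i+1) - x (i+1) * b := by
        rw [hy, Function.update_self]
      have hyo : ∀ j, j ≠ i → j ≠ i + 1 → y j = x j := by
        intro j hj1 hj2
        rw [hy, Function.update_of_ne hj2, Function.update_of_ne hj1]
      have ddi : dd x y i = a := by
        unfold dd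
        rw [hyk]
        linear_combination a * hxx i
      have ddi1 : dd x y (i+1) = b := by
        unfold dd
        rw [hyk1]
        linear_combination b * hxx (i+1)
      have hymem : y ∈ face i := by
        constructor
        · intro j
          by_cases hj1 : j = i
          · rw [hj1, hyk]
            rcases hall i with h | h <;> rw [h] <;> constructor <;> linarith
          by_cases hj2 : j = i + 1
          · rw [hj2, hyk1]
            rcases hall (i+1) with h | h <;> rw [h] <;> constructor <;> linarith
          · rw [hyo j hj1 hj2]; exact hbd j
        · intro j hj1 hj2
          rw [hyo j hj1 hj2]
          exact hall j
      have habs1 : |y i - x i| = a := by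
        rw [hyk, show x i - x i * a - x i = -(x i * a) by ring, abs_neg, abs_mul, hx1 i,
          one_mul, abs_of_nonneg ha0]
      have habs2 : |y (i+1) - x (i+1)| = b := by
        rw [hyk1, show x (i+1) - x (i+1) * b - x (i+1) = -(x (i+1) * b) by ring, abs_neg,
          abs_mul, hx1 (i+1), one_mul, abs_of_nonneg hb0]
      have hfyz : f y = z := by
        funext t
        rw [freduce y i hyo t, ddi, ddi1]
        exact (hzab t).symm
      refine ⟨y, ⟨mem_RZ_iff.mpr ⟨i, hymem⟩, ?_, ?_⟩, hfyz⟩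
      · rw [Metric.mem_ball, dist_pi_lt_iff one_pos]
        intro j
        rw [Real.dist_eq]
        by_cases hj1 : j = i
        · rw [hj1, habs1]; exact ha1
        by_cases hj2 : j = i + 1
        · rw [hj2, habs2]; exact hb1
        · rw [hyo j hj1 hj2]; simp
      · show f y ∈ Metric.ball 0 δ
        rw [hfyz]
        exact hz
  exact chart_lemma f hfc K hKc hinj W hWopen hsub
    (Metric.ball 0 δ) Metric.isOpen_ball himg x hx hxW

end

/-- `RZ m` (with the subspace topology) is a topological 2-manifold: every point
has an open neighborhood homeomorphic to an open subset of `ℝ²`. -/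
theorem RZ_is_two_manifold (m : ℕ) (hm : 3 ≤ m) (x : Fin m → ℝ) (hx : x ∈ RZ m) :
    ∃ (U : Set (RZ m)) (V : Set (Fin 2 → ℝ)),
      IsOpen U ∧ IsOpen V ∧ (⟨x, hx⟩ : RZ m) ∈ U ∧ Nonempty (U ≃ₜ V) := by
  haveI : NeZero m := ⟨by omega⟩
  obtain ⟨i₀, hxi₀⟩ := mem_RZ_iff.mp hx
  by_cases hall : ∀ j, x j = -1 ∨ x j = 1
  · exact vertex_case hm x hx hall
  · push_neg at hall
    obtain ⟨k, hk⟩ := hall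
    have hknp : ¬(x k = -1 ∨ x k = 1) := not_or.mpr hk
    by_cases h2 : ∀ j, j ≠ k → (x j = -1 ∨ x j = 1)
    · exact edge_case hm x hx k hxi₀.1 hknp h2
    · push_neg at h2
      obtain ⟨k', hk'ne, hk'⟩ := h2
      have hk'np : ¬(x k' = -1 ∨ x k' = 1) := not_or.mpr hk'
      have hmem : ∀ j, ¬(x j = -1 ∨ x j = 1) → (j = i₀ ∨ j = i₀ + 1) := by
        intro j hj
        by_contra hc
        push_neg at hc
        exact hj (hxi₀.2 j hc.1 hc.2)
      have hi1 : ¬(x i₀ = -1 ∨ x i₀ = 1) ∧ ¬(x (i₀+1) = -1 ∨ x (i₀+1) = 1) := by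
        rcases hmem k hknp with h | h <;> rcases hmem k' hk'np with h' | h'
        · exact absurd (h.trans h'.symm).symm hk'ne
        · rw [h] at hknp; rw [h'] at hk'np; exact ⟨hknp, hk'np⟩
        · rw [h] at hknp; rw [h'] at hk'np; exact ⟨hk'np, hknp⟩
        · exact absurd (h.trans h'.symm).symm hk'ne
      exact interior_case hm x hx i₀ hxi₀ hi1.1 hi1.2
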